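/- Let X be a real random variable with differentiable density and finite positive Fisher information J(X), and for s > 0 let X_s = X + Z with Z ~ N(0, s) independent of X. Then J(X_s) ≤ 1/(1/J(X) + s), i.e. Fisher information decreases under Gaussian convolution at least as fast as the Stam bound predicts. -/

import Mathlib

open MeasureTheory Real

/-- Score function `ρ = p'/p` of a density `p` on `ℝ`. -/
noncomputable def score (p : ℝ → ℝ) (x : ℝ) : ℝ := deriv p x / p x

/-- Fisher information `J = E[ρ(X)²] = ∫ p ρ²` of a density `p` on `ℝ`. -/
noncomputable def fisherInfo (p : ℝ → ℝ) : ℝ := ∫ x, p x * (score p x) ^ 2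

/-- Density of the one-dimensional Gaussian `N(0, s)` for `s > 0`. -/
noncomputable def gauss1 (s x : ℝ) : ℝ :=
  (Real.sqrt (2 * Real.pi * s))⁻¹ * Real.exp (-(x ^ 2) / (2 * s))

/-- Density of `X_s = X + Z`, `Z ~ N(0, s)` independent of `X`, where `X` has density `p`:
the convolution of `p` with the Gaussian density. -/
noncomputable def pertG (p : ℝ → ℝ) (s : ℝ) (x : ℝ) : ℝ := ∫ y, p y * gauss1 s (x - y)

section Gauss
variable {s : ℝ} (hs : 0 < s)

lemma gauss1_pos (hs : 0 < s) (x : ℝ) : 0 < gauss1 s x := by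
  have h2 : 0 < 2 * Real.pi * s := by positivity
  exact mul_pos (inv_pos.2 (Real.sqrt_pos.2 h2)) (Real.exp_pos _)

lemma gauss1_eq (x : ℝ) : gauss1 s x =
    (Real.sqrt (2 * Real.pi * s))⁻¹ * Real.exp (-(1/(2*s)) * x ^ 2) := by
  rw [gauss1]; ring_nf

lemma hasDerivAt_gauss1 (x : ℝ) :
    HasDerivAt (gauss1 s) (-(x/s) * gauss1 s x) x := by
  have h : HasDerivAt (fun x : ℝ => -(x ^ 2) / (2 * s)) (-(x/s)) x := by
    have := ((hasDerivAt_pow 2 x).neg).div_const (2 * s)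
    refine this.congr_deriv ?_
    field_simp; ring
  have := (h.exp).const_mul (Real.sqrt (2 * Real.pi * s))⁻¹
  refine this.congr_deriv ?_
  rw [gauss1]; ring

lemma measurable_gauss1 : Measurable (gauss1 s) := by
  unfold gauss1; fun_prop

lemma integrable_gauss1 (hs : 0 < s) : Integrable (gauss1 s) := by
  have h : (0:ℝ) < 1/(2*s) := by positivity
  have := (integrable_exp_neg_mul_sq h).const_mul (Real.sqrt (2 * Real.pi * s))⁻¹
  apply this.congr
  filter_upwards with x
  rw [gauss1_eq]

lemma integral_gauss1 (hs : 0 < s) : (∫ x, gauss1 s x) = 1 := by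
  have h : (0:ℝ) < 1/(2*s) := by positivity
  simp_rw [gauss1_eq, integral_const_mul, integral_gaussian]
  rw [show π / (1/(2*s)) = 2 * π * s by field_simp]
  rw [inv_mul_cancel₀ (ne_of_gt (Real.sqrt_pos.2 (by positivity)))]

lemma gauss1_le (hs : 0 < s) (x : ℝ) : gauss1 s x ≤ (Real.sqrt (2 * Real.pi * s))⁻¹ := by
  rw [gauss1]
  have h1 : Real.exp (-(x ^ 2) / (2 * s)) ≤ 1 := by
    rw [Real.exp_le_one_iff]
    apply div_nonpos_of_nonpos_of_nonneg (neg_nonpos.2 (sq_nonneg x)) (by positivity)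
  nlinarith [Real.sqrt_pos.2 (show (0:ℝ) < 2 * Real.pi * s by positivity), Real.exp_pos (-(x ^ 2) / (2 * s)), inv_pos.2 (Real.sqrt_pos.2 (show (0:ℝ) < 2 * Real.pi * s by positivity))]

lemma abs_mul_exp_le (hs : 0 < s) (x : ℝ) : |x| * Real.exp (-(x ^ 2) / (2 * s)) ≤ Real.sqrt (2*s) := by
  set r := Real.sqrt (2*s) with hr
  have hsq : r ^ 2 = 2*s := Real.sq_sqrt (by positivity)
  have hrpos : 0 < r := Real.sqrt_pos.2 (by positivity)
  set t := x^2/(2*s) with htdef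
  have key : |x| * r ≤ x^2 + 2*s := by nlinarith [sq_nonneg (|x| - r), sq_abs x]
  have h2 : (1:ℝ) + t ≤ Real.exp t := by
    have := Real.add_one_le_exp t; linarith
  have h3 : x^2 + 2*s = (1 + t)*(2*s) := by
    rw [htdef]; field_simp; ring
  have h4 : |x| * r ≤ Real.exp t * r * r := by
    have : (1 + t)*(2*s) ≤ Real.exp t * (2*s) := by nlinarith
    calc |x| * r ≤ (1+t)*(2*s) := by linarith
      _ ≤ Real.exp t * (2*s) := this
      _ = Real.exp t * r * r := by rw [mul_assoc, ← pow_two, hsq]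
  have h5 : |x| ≤ Real.exp t * r := le_of_mul_le_mul_right h4 hrpos
  have hexp : Real.exp (-(x ^ 2) / (2 * s)) = (Real.exp t)⁻¹ := by
    rw [← Real.exp_neg]; congr 1; rw [htdef]; ring
  rw [hexp]
  have hepos : 0 < Real.exp t := Real.exp_pos t
  calc |x| * (Real.exp t)⁻¹ ≤ (Real.exp t * r) * (Real.exp t)⁻¹ :=
        mul_le_mul_of_nonneg_right h5 (by positivity)
    _ = r := by field_simp

lemma sq_mul_exp_le (hs : 0 < s) (a x : ℝ) (ha : 0 < a) :
    x^2 * Real.exp (-(x ^ 2) / (a * s)) ≤ a * s := by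
  have h2 : x^2/(a*s) ≤ Real.exp (x^2/(a*s)) := by
    have := Real.add_one_le_exp (x^2/(a*s)); linarith
  have has : 0 < a * s := by positivity
  rw [div_le_iff₀ has] at h2
  have := mul_le_mul_of_nonneg_right h2 (Real.exp_pos (-(x ^ 2) / (a * s))).le
  calc x^2 * Real.exp (-(x ^ 2) / (a * s)) ≤ (Real.exp (x^2/(a*s)) * (a*s)) * Real.exp (-(x ^ 2) / (a * s)) := this
    _ = a * s := by
        rw [mul_comm (Real.exp _), mul_assoc, ← Real.exp_add]
        rw [show x^2/(a*s) + -(x ^ 2) / (a * s) = 0 by ring, Real.exp_zero, mul_one]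

lemma abs_mul_gauss1_le (hs : 0 < s) (x : ℝ) :
    |x| * gauss1 s x ≤ (Real.sqrt (2 * Real.pi * s))⁻¹ * Real.sqrt (2*s) := by
  rw [gauss1, ← mul_assoc, mul_comm (|x|), mul_assoc]
  exact mul_le_mul_of_nonneg_left (abs_mul_exp_le hs x) (by positivity)

lemma sq_mul_gauss1_le (hs : 0 < s) (x : ℝ) :
    x^2 * gauss1 s x ≤ (Real.sqrt (2 * Real.pi * s))⁻¹ * (4*s) * Real.exp (-(x ^ 2) / (4 * s)) := by
  have key : x^2 * Real.exp (-(x ^ 2) / (2 * s)) ≤ 4*s* Real.exp (-(x ^ 2) / (4 * s)) := by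
    have hsplit : Real.exp (-(x ^ 2) / (2 * s)) = Real.exp (-(x ^ 2) / (4 * s)) * Real.exp (-(x ^ 2) / (4 * s)) := by
      rw [← Real.exp_add]; congr 1; ring
    rw [hsplit, ← mul_assoc]
    apply mul_le_mul_of_nonneg_right _ (Real.exp_pos _).le
    have := sq_mul_exp_le hs 4 x (by norm_num)
    linarith
  calc x^2 * gauss1 s x = (Real.sqrt (2 * Real.pi * s))⁻¹ * (x^2 * Real.exp (-(x ^ 2) / (2 * s))) := by
        rw [gauss1]; ring
    _ ≤ (Real.sqrt (2 * Real.pi * s))⁻¹ * (4*s* Real.exp (-(x ^ 2) / (4 * s))) :=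
        mul_le_mul_of_nonneg_left key (by positivity)
    _ = (Real.sqrt (2 * Real.pi * s))⁻¹ * (4*s) * Real.exp (-(x ^ 2) / (4 * s)) := by ring

lemma integrable_mul_gauss1 (hs : 0 < s) : Integrable (fun x => x * gauss1 s x) := by
  have h : (0:ℝ) < 1/(2*s) := by positivity
  have := (integrable_mul_exp_neg_mul_sq h).const_mul (Real.sqrt (2 * Real.pi * s))⁻¹
  apply this.congr
  filter_upwards with x
  rw [gauss1_eq]; ring

lemma integrable_sq_mul_gauss1 (hs : 0 < s) : Integrable (fun x => x^2 * gauss1 s x) := by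
  have h : (0:ℝ) < 1/(4*s) := by positivity
  have hb := ((integrable_exp_neg_mul_sq h).const_mul ((Real.sqrt (2 * Real.pi * s))⁻¹ * (4*s)))
  apply Integrable.mono' hb ((measurable_id.pow_const 2).mul measurable_gauss1).aestronglyMeasurable
  filter_upwards with x
  simp only [id_eq, Pi.mul_apply]
  rw [Real.norm_eq_abs, abs_of_nonneg (mul_nonneg (sq_nonneg x) (gauss1_pos hs x).le)]
  have := sq_mul_gauss1_le hs x
  calc x^2 * gauss1 s x ≤ (Real.sqrt (2 * Real.pi * s))⁻¹ * (4*s) * Real.exp (-(x ^ 2) / (4 * s)) := this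
    _ = (Real.sqrt (2 * Real.pi * s))⁻¹ * (4*s) * Real.exp (-(1/(4*s)) * x ^ 2) := by
        congr 1; congr 1; ring

lemma integral_mul_gauss1 (hs : 0 < s) : (∫ x, x * gauss1 s x) = 0 := by
  have hderiv : ∀ x, HasDerivAt (gauss1 s) (-(x/s) * gauss1 s x) x := hasDerivAt_gauss1
  have h0 : (∫ x, -(x/s) * gauss1 s x) = 0 :=
    integral_eq_zero_of_hasDerivAt_of_integrable hderiv
      (by
        have := (integrable_mul_gauss1 hs).const_mul (-s⁻¹)
        apply this.congr; filter_upwards with x; ring)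
      (integrable_gauss1 hs)
  have : (∫ x, -(x/s) * gauss1 s x) = -s⁻¹ * ∫ x, x * gauss1 s x := by
    rw [← integral_const_mul]; congr 1; funext x; ring
  rw [this] at h0
  have hs' : (-s⁻¹ : ℝ) ≠ 0 := neg_ne_zero.2 (inv_ne_zero hs.ne')
  exact (mul_eq_zero.1 h0).resolve_left hs'

lemma integral_sq_mul_gauss1 (hs : 0 < s) : (∫ x, x^2 * gauss1 s x) = s := by
  have hderiv : ∀ x, HasDerivAt (fun x => x * gauss1 s x)
      (gauss1 s x - x^2/s * gauss1 s x) x := by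
    intro x
    have := (hasDerivAt_id x).mul (hasDerivAt_gauss1 (s := s) x)
    refine this.congr_deriv ?_
    simp; ring
  have hint : Integrable (fun x => gauss1 s x - x^2/s * gauss1 s x) := by
    apply (integrable_gauss1 hs).sub
    have := (integrable_sq_mul_gauss1 hs).const_mul s⁻¹
    apply this.congr; filter_upwards with x; ring
  have h0 := integral_eq_zero_of_hasDerivAt_of_integrable hderiv hint (integrable_mul_gauss1 hs)
  rw [integral_sub (integrable_gauss1 hs)
      (by
        have := (integrable_sq_mul_gauss1 hs).const_mul s⁻¹
        apply this.congr; filter_upwards with x; ring),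
    integral_gauss1 hs] at h0
  have : (∫ x, x^2/s * gauss1 s x) = s⁻¹ * ∫ x, x^2 * gauss1 s x := by
    rw [← integral_const_mul]; congr 1; funext x; ring
  rw [this] at h0
  field_simp at h0 ⊢
  linarith

lemma sq_mul_gauss1_le' (hs : 0 < s) (x : ℝ) :
    x^2 * gauss1 s x ≤ (Real.sqrt (2 * Real.pi * s))⁻¹ * (2*s) := by
  have key := sq_mul_exp_le hs 2 x (by norm_num)
  calc x^2 * gauss1 s x = (Real.sqrt (2 * Real.pi * s))⁻¹ * (x^2 * Real.exp (-(x ^ 2) / (2 * s))) := by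
        rw [gauss1]; ring
    _ ≤ (Real.sqrt (2 * Real.pi * s))⁻¹ * (2*s) :=
        mul_le_mul_of_nonneg_left key (by positivity)

end Gauss

section Main

variable {p : ℝ → ℝ}

lemma integrable_of_density (hpm : Measurable p) (hp1 : (∫ x, p x) = 1) : Integrable p := by
  by_contra h
  rw [integral_undef h] at hp1
  norm_num at hp1

lemma deriv_eq_mul_score (hp0 : ∀ x, 0 ≤ p x) (hd : Differentiable ℝ p) (x : ℝ) :
    deriv p x = p x * score p x := by
  by_cases h : p x = 0
  · have hmin : IsLocalMin p x := by
      apply Filter.Eventually.of_forall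
      intro y; rw [h]; exact hp0 y
    rw [hmin.deriv_eq_zero, h, zero_mul]
  · rw [score]; field_simp

lemma integrable_deriv_of_fisher (hp0 : ∀ x, 0 ≤ p x) (hpm : Measurable p)
    (hp1 : (∫ x, p x) = 1) (hd : Differentiable ℝ p)
    (hJfin : Integrable (fun x => p x * (score p x) ^ 2)) :
    Integrable (deriv p) := by
  have hIp : Integrable p := integrable_of_density hpm hp1
  apply Integrable.mono' (((hIp.add hJfin).const_mul (1/2 : ℝ)))
    (measurable_deriv p).aestronglyMeasurable
  filter_upwards with x
  rw [deriv_eq_mul_score hp0 hd x, Real.norm_eq_abs, abs_mul,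
    abs_of_nonneg (hp0 x)]
  have h1 := hp0 x
  have h2 : p x * (1 - |score p x|)^2 ≥ 0 := mul_nonneg h1 (sq_nonneg _)
  have h3 : |score p x|^2 = score p x ^ 2 := sq_abs _
  simp only [Pi.add_apply]
  nlinarith [abs_nonneg (score p x)]

lemma measurable_score (hpm : Measurable p) : Measurable (score p) :=
  (measurable_deriv p).div hpm

end Main
section Conv

variable {p : ℝ → ℝ} {s : ℝ}

lemma measurable_gauss1_sub (x : ℝ) : Measurable (fun y => gauss1 s (x - y)) :=
  measurable_gauss1.comp (measurable_const.sub measurable_id)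

lemma integrable_conv_integrand (hs : 0 < s) (hp0 : ∀ x, 0 ≤ p x) (hpm : Measurable p)
    (hIp : Integrable p) (x : ℝ) : Integrable (fun y => p y * gauss1 s (x - y)) := by
  apply Integrable.mono' (hIp.const_mul (Real.sqrt (2 * Real.pi * s))⁻¹)
    (hpm.mul (measurable_gauss1_sub x)).aestronglyMeasurable
  filter_upwards with y
  simp only [Pi.mul_apply]
  rw [Real.norm_eq_abs, abs_of_nonneg (mul_nonneg (hp0 y) (gauss1_pos hs _).le)]
  calc p y * gauss1 s (x - y) ≤ p y * (Real.sqrt (2 * Real.pi * s))⁻¹ :=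
        mul_le_mul_of_nonneg_left (gauss1_le hs _) (hp0 y)
    _ = (Real.sqrt (2 * Real.pi * s))⁻¹ * p y := mul_comm _ _

lemma pertG_pos (hs : 0 < s) (hp0 : ∀ x, 0 ≤ p x) (hpm : Measurable p)
    (hp1 : (∫ x, p x) = 1) (x : ℝ) : 0 < pertG p s x := by
  have hIp : Integrable p := integrable_of_density hpm hp1
  have hint := integrable_conv_integrand hs hp0 hpm hIp x
  have hnn : 0 ≤ fun y => p y * gauss1 s (x - y) :=
    fun y => mul_nonneg (hp0 y) (gauss1_pos hs _).le
  rcases lt_or_eq_of_le (integral_nonneg hnn) with h | h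
  · exact h
  · exfalso
    have hzero := (integral_eq_zero_iff_of_nonneg hnn hint).1 h.symm
    have hp_zero : p =ᵐ[MeasureTheory.volume] 0 := by
      filter_upwards [hzero] with y hy
      simp only [Pi.zero_apply] at hy ⊢
      rcases mul_eq_zero.1 hy with h' | h'
      · exact h'
      · exact absurd h' (gauss1_pos hs _).ne'
    rw [integral_congr_ae hp_zero] at hp1
    simp at hp1

lemma hasDerivAt_pertG (hs : 0 < s) (hp0 : ∀ x, 0 ≤ p x) (hpm : Measurable p)
    (hIp : Integrable p) (x : ℝ) :
    HasDerivAt (pertG p s) (∫ y, p y * (-((x - y)/s) * gauss1 s (x - y))) x := by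
  set c := (Real.sqrt (2 * Real.pi * s))⁻¹ with hc
  have hcpos : 0 < c := inv_pos.2 (Real.sqrt_pos.2 (by positivity))
  refine (hasDerivAt_integral_of_dominated_loc_of_deriv_le (F := fun x y => p y * gauss1 s (x - y))
    (F' := fun x y => p y * (-((x - y)/s) * gauss1 s (x - y)))
    (bound := fun y => p y * (c * Real.sqrt (2*s) / s)) (Metric.ball_mem_nhds x one_pos) ?_ ?_ ?_ ?_ ?_ ?_).2
  · filter_upwards with x'
    exact (hpm.mul (measurable_gauss1_sub x')).aestronglyMeasurable
  · exact integrable_conv_integrand hs hp0 hpm hIp x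
  · exact (hpm.mul (((measurable_const.sub measurable_id).div_const s).neg.mul
      (measurable_gauss1_sub x))).aestronglyMeasurable
  · filter_upwards with y
    intro x' _
    rw [Real.norm_eq_abs, abs_mul, abs_of_nonneg (hp0 y)]
    apply mul_le_mul_of_nonneg_left _ (hp0 y)
    rw [abs_mul, abs_neg, abs_div, abs_of_pos hs, abs_of_nonneg (gauss1_pos hs _).le,
      div_mul_eq_mul_div, div_le_div_iff_of_pos_right hs]
    exact abs_mul_gauss1_le hs _
  · exact hIp.mul_const _
  · filter_upwards with y
    intro x' _
    have h1 : HasDerivAt (fun x => gauss1 s (x - y)) (-((x' - y)/s) * gauss1 s (x' - y)) x' := by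
      have := (hasDerivAt_gauss1 (s := s) (x' - y)).comp x' ((hasDerivAt_id x').sub_const y)
      simp at this; exact this.congr_deriv (by ring)
    simpa using h1.const_mul (p y)

lemma integrable_deriv_mul_gauss (hs : 0 < s) (hIp' : Integrable (deriv p)) (x : ℝ) :
    Integrable (fun y => deriv p y * gauss1 s (x - y)) := by
  set c := (Real.sqrt (2 * Real.pi * s))⁻¹ with hc
  apply Integrable.mono' (hIp'.norm.const_mul c)
    ((measurable_deriv p).mul (measurable_gauss1_sub x)).aestronglyMeasurable
  filter_upwards with y
  simp only [Pi.mul_apply]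
  rw [Real.norm_eq_abs, abs_mul, abs_of_nonneg (gauss1_pos hs _).le]
  calc |deriv p y| * gauss1 s (x - y) ≤ |deriv p y| * c :=
        mul_le_mul_of_nonneg_left (gauss1_le hs _) (abs_nonneg _)
    _ = c * ‖deriv p y‖ := by rw [Real.norm_eq_abs]; ring

lemma integrable_mul_lin_gauss (hs : 0 < s) (hp0 : ∀ x, 0 ≤ p x) (hpm : Measurable p)
    (hIp : Integrable p) (x : ℝ) :
    Integrable (fun y => p y * (-((x - y)/s) * gauss1 s (x - y))) := by
  set c := (Real.sqrt (2 * Real.pi * s))⁻¹ with hc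
  apply Integrable.mono' (hIp.const_mul (c * Real.sqrt (2*s) / s))
    (hpm.mul (((measurable_const.sub measurable_id).div_const s).neg.mul
      (measurable_gauss1_sub x))).aestronglyMeasurable
  filter_upwards with y
  simp only [Pi.mul_apply, Pi.neg_apply, Pi.sub_apply, id_eq]
  rw [Real.norm_eq_abs, abs_mul, abs_of_nonneg (hp0 y)]
  calc p y * |(-((x - y)/s) * gauss1 s (x - y))| ≤ p y * (c * Real.sqrt (2*s) / s) := by
        apply mul_le_mul_of_nonneg_left _ (hp0 y)
        rw [abs_mul, abs_neg, abs_div, abs_of_pos hs, abs_of_nonneg (gauss1_pos hs _).le,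
          div_mul_eq_mul_div, div_le_div_iff_of_pos_right hs]
        exact abs_mul_gauss1_le hs _
    _ = c * Real.sqrt (2*s) / s * p y := mul_comm _ _

lemma conv_deriv_swap (hs : 0 < s) (hp0 : ∀ x, 0 ≤ p x) (hpm : Measurable p)
    (hIp : Integrable p) (hd : Differentiable ℝ p) (hIp' : Integrable (deriv p)) (x : ℝ) :
    (∫ y, p y * (-((x - y)/s) * gauss1 s (x - y))) = ∫ y, deriv p y * gauss1 s (x - y) := by
  set c := (Real.sqrt (2 * Real.pi * s))⁻¹ with hc
  have hcpos : 0 < c := inv_pos.2 (Real.sqrt_pos.2 (by positivity))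
  have hterm1 : Integrable (fun y => deriv p y * gauss1 s (x - y)) :=
    integrable_deriv_mul_gauss hs hIp' x
  have hterm2 : Integrable (fun y => p y * (-((x - y)/s) * gauss1 s (x - y))) :=
    integrable_mul_lin_gauss hs hp0 hpm hIp x
  have hderiv : ∀ y, HasDerivAt (fun y => p y * gauss1 s (x - y))
      (deriv p y * gauss1 s (x - y) - p y * (-((x - y)/s) * gauss1 s (x - y))) y := by
    intro y
    have hg : HasDerivAt (fun y => gauss1 s (x - y)) (((x - y)/s) * gauss1 s (x - y)) y := by
      have := (hasDerivAt_gauss1 (s := s) (x - y)).comp y ((hasDerivAt_const y x).sub (hasDerivAt_id y))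
      simp at this; exact this
    have := ((hd y).hasDerivAt).mul hg
    refine this.congr_deriv ?_
    ring
  have h0 := integral_eq_zero_of_hasDerivAt_of_integrable hderiv
    (hterm1.sub hterm2) (integrable_conv_integrand hs hp0 hpm hIp x)
  rw [integral_sub hterm1 hterm2] at h0
  linarith

end Conv

section Rep
variable {p : ℝ → ℝ} {s : ℝ}

lemma measurable_w (hpm : Measurable p) (a b s : ℝ) (x : ℝ) :
    Measurable (fun y => a * score p y + b * (-((x - y)/s))) :=
  ((measurable_score hpm).const_mul a).add
    (((measurable_const.sub measurable_id).div_const s).neg.const_mul b)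

lemma integrable_hw (hs : 0 < s) (hp0 : ∀ x, 0 ≤ p x) (hpm : Measurable p)
    (hIp : Integrable p) (hd : Differentiable ℝ p) (hIp' : Integrable (deriv p))
    (a b : ℝ) (x : ℝ) :
    Integrable (fun y => p y * gauss1 s (x - y) * (a * score p y + b * (-((x - y)/s)))) := by
  apply (((integrable_deriv_mul_gauss hs hIp' x).const_mul a).add
    ((integrable_mul_lin_gauss hs hp0 hpm hIp x).const_mul b)).congr
  filter_upwards with y
  simp only [Pi.add_apply]
  rw [deriv_eq_mul_score hp0 hd y]
  ring

lemma score_rep (hs : 0 < s) (hp0 : ∀ x, 0 ≤ p x) (hpm : Measurable p)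
    (hIp : Integrable p) (hd : Differentiable ℝ p) (hIp' : Integrable (deriv p))
    (a b : ℝ) (hab : a + b = 1) (x : ℝ) :
    deriv (pertG p s) x =
      ∫ y, p y * gauss1 s (x - y) * (a * score p y + b * (-((x - y)/s))) := by
  rw [(hasDerivAt_pertG hs hp0 hpm hIp x).deriv]
  have hswap := conv_deriv_swap hs hp0 hpm hIp hd hIp' x
  have hre : ∀ y, p y * gauss1 s (x - y) * (a * score p y + b * (-((x - y)/s)))
      = a * (deriv p y * gauss1 s (x - y)) + b * (p y * (-((x - y)/s) * gauss1 s (x - y))) := by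
    intro y
    rw [deriv_eq_mul_score hp0 hd y]
    ring
  calc (∫ y, p y * (-((x - y)/s) * gauss1 s (x - y)))
      = a * (∫ y, deriv p y * gauss1 s (x - y))
        + b * (∫ y, p y * (-((x - y)/s) * gauss1 s (x - y))) := by
        rw [← hswap, ← add_mul, hab, one_mul]
    _ = (∫ y, a * (deriv p y * gauss1 s (x - y)))
        + (∫ y, b * (p y * (-((x - y)/s) * gauss1 s (x - y)))) := by
        rw [integral_const_mul, integral_const_mul]
    _ = ∫ y, a * (deriv p y * gauss1 s (x - y))
        + b * (p y * (-((x - y)/s) * gauss1 s (x - y))) := by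
        rw [← integral_add ((integrable_deriv_mul_gauss hs hIp' x).const_mul a)
          ((integrable_mul_lin_gauss hs hp0 hpm hIp x).const_mul b)]
    _ = ∫ y, p y * gauss1 s (x - y) * (a * score p y + b * (-((x - y)/s))) := by
        congr 1; funext y; rw [hre y]

lemma integrable_hw2 (hs : 0 < s) (hp0 : ∀ x, 0 ≤ p x) (hpm : Measurable p)
    (hIp : Integrable p) (hJfin : Integrable (fun x => p x * (score p x) ^ 2))
    (a b : ℝ) (x : ℝ) :
    Integrable (fun y => p y * gauss1 s (x - y) * (a * score p y + b * (-((x - y)/s)))^2) := by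
  set c := (Real.sqrt (2 * Real.pi * s))⁻¹ with hc
  have hcpos : 0 < c := inv_pos.2 (Real.sqrt_pos.2 (by positivity))
  apply Integrable.mono' ((hJfin.const_mul (2*a^2*c)).add (hIp.const_mul (2*b^2*(2*c/s))))
    (((hpm.mul (measurable_gauss1_sub x)).mul ((measurable_w hpm a b s x).pow_const 2))).aestronglyMeasurable
  filter_upwards with y
  have hP := hp0 y
  have hG := gauss1_pos hs (x - y)
  have hGle := gauss1_le hs (x - y)
  have hsq := sq_mul_gauss1_le' hs (x - y)
  set ρ := score p y
  set v := -((x - y)/s) with hv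
  simp only [Pi.mul_apply]
  rw [Real.norm_eq_abs, abs_of_nonneg (mul_nonneg (mul_nonneg hP hG.le) (sq_nonneg _))]
  have step1 : p y * gauss1 s (x - y) * (a * ρ + b * v)^2
      ≤ 2*a^2 * (p y * ρ^2 * gauss1 s (x - y)) + 2*b^2 * (p y * v^2 * gauss1 s (x - y)) := by
    nlinarith [mul_nonneg (mul_nonneg hP hG.le) (sq_nonneg (a * ρ - b * v))]
  have step2 : p y * ρ^2 * gauss1 s (x - y) ≤ c * (p y * ρ^2) := by
    calc p y * ρ^2 * gauss1 s (x - y) ≤ p y * ρ^2 * c :=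
          mul_le_mul_of_nonneg_left hGle (by positivity)
      _ = c * (p y * ρ^2) := mul_comm _ _
  have step3 : p y * v^2 * gauss1 s (x - y) ≤ (2*c/s) * p y := by
    have hveq : v^2 = (x - y)^2 / s^2 := by rw [hv]; ring
    have h1 : p y * v^2 * gauss1 s (x - y) = p y * ((x - y)^2 * gauss1 s (x - y)) / s^2 := by
      rw [hveq]; ring
    rw [h1]
    have h2 : p y * ((x - y)^2 * gauss1 s (x - y)) ≤ p y * (c * (2*s)) :=
      mul_le_mul_of_nonneg_left hsq hP
    rw [div_le_iff₀ (by positivity : (0:ℝ) < s^2)]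
    calc p y * ((x - y)^2 * gauss1 s (x - y)) ≤ p y * (c * (2*s)) := h2
      _ = 2*c/s * p y * s^2 := by field_simp
  simp only [Pi.add_apply]
  calc p y * gauss1 s (x - y) * (a * ρ + b * v)^2
      ≤ 2*a^2 * (p y * ρ^2 * gauss1 s (x - y)) + 2*b^2 * (p y * v^2 * gauss1 s (x - y)) := step1
    _ ≤ 2*a^2 * (c * (p y * ρ^2)) + 2*b^2 * ((2*c/s) * p y) := by
        apply add_le_add
        · exact mul_le_mul_of_nonneg_left step2 (by positivity)
        · exact mul_le_mul_of_nonneg_left step3 (by positivity)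
    _ = 2*a^2*c * (p y * ρ^2) + 2*b^2*(2*c/s) * p y := by ring

lemma pointwise_bound (hs : 0 < s) (hp0 : ∀ x, 0 ≤ p x) (hpm : Measurable p)
    (hp1 : (∫ x, p x) = 1) (hd : Differentiable ℝ p) (hIp' : Integrable (deriv p))
    (hJfin : Integrable (fun x => p x * (score p x) ^ 2))
    (a b : ℝ) (hab : a + b = 1) (x : ℝ) :
    pertG p s x * (score (pertG p s) x)^2
      ≤ ∫ y, p y * gauss1 s (x - y) * (a * score p y + b * (-((x - y)/s)))^2 := by
  have hIp : Integrable p := integrable_of_density hpm hp1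
  set qx := pertG p s x with hqx
  set q' := deriv (pertG p s) x with hq'
  set t := score (pertG p s) x with ht
  set w := fun y => a * score p y + b * (-((x - y)/s)) with hw
  have hqpos : 0 < qx := pertG_pos hs hp0 hpm hp1 x
  have htq : t * qx = q' := by
    rw [ht, score, ← hq', ← hqx]
    field_simp
  have h_h : Integrable (fun y => p y * gauss1 s (x - y)) :=
    integrable_conv_integrand hs hp0 hpm hIp x
  have h_hw : Integrable (fun y => p y * gauss1 s (x - y) * w y) :=
    integrable_hw hs hp0 hpm hIp hd hIp' a b x
  have h_hw2 : Integrable (fun y => p y * gauss1 s (x - y) * (w y)^2) :=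
    integrable_hw2 hs hp0 hpm hIp hJfin a b x
  have hexp : (∫ y, p y * gauss1 s (x - y) * (w y - t)^2)
      = (∫ y, p y * gauss1 s (x - y) * (w y)^2)
        - 2*t * (∫ y, p y * gauss1 s (x - y) * w y)
        + t^2 * (∫ y, p y * gauss1 s (x - y)) := by
    have hfun : (fun y => p y * gauss1 s (x - y) * (w y - t)^2)
        = fun y => (p y * gauss1 s (x - y) * (w y)^2
            - 2*t * (p y * gauss1 s (x - y) * w y)) + t^2 * (p y * gauss1 s (x - y)) := by
      funext y; ring
    have hsub : Integrable (fun y => p y * gauss1 s (x - y) * (w y)^2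
        - 2*t*(p y * gauss1 s (x - y) * w y)) := h_hw2.sub (h_hw.const_mul (2*t))
    rw [hfun, integral_add hsub (h_h.const_mul (t^2)),
      integral_sub h_hw2 (h_hw.const_mul (2*t)), integral_const_mul, integral_const_mul]
  have h0 : 0 ≤ ∫ y, p y * gauss1 s (x - y) * (w y - t)^2 :=
    integral_nonneg fun y => mul_nonneg (mul_nonneg (hp0 y) (gauss1_pos hs _).le) (sq_nonneg _)
  have hval : (∫ y, p y * gauss1 s (x - y) * w y) = q' :=
    (score_rep hs hp0 hpm hIp hd hIp' a b hab x).symm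
  have hq : (∫ y, p y * gauss1 s (x - y)) = qx := rfl
  rw [hexp, hval, hq] at h0
  have hkey : qx * t^2 = t * q' := by rw [← htq]; ring
  nlinarith [htq]

end Rep

section Fub
variable {p : ℝ → ℝ} {s : ℝ}

lemma integrable_inner_shift (hs : 0 < s) (P ρ a b : ℝ) :
    Integrable (fun u => P * gauss1 s u * (a * ρ + b * (-(u/s)))^2) := by
  have hsplit : (fun u => P * gauss1 s u * (a * ρ + b * (-(u/s)))^2)
      = fun u => (P * (a*ρ)^2) * gauss1 s u + ((-(2*a*b*ρ*P/s)) * (u * gauss1 s u)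
          + (P * b^2 / s^2) * (u^2 * gauss1 s u)) := by
    funext u; field_simp; ring
  rw [hsplit]
  exact ((integrable_gauss1 hs).const_mul _).add
    (((integrable_mul_gauss1 hs).const_mul _).add ((integrable_sq_mul_gauss1 hs).const_mul _))

lemma inner_integral_value (hs : 0 < s) (P ρ a b : ℝ) :
    (∫ u, P * gauss1 s u * (a * ρ + b * (-(u/s)))^2)
      = P * (a^2 * ρ^2 + b^2 * (1/s)) := by
  have hsplit : (fun u => P * gauss1 s u * (a * ρ + b * (-(u/s)))^2)
      = fun u => (P * (a*ρ)^2) * gauss1 s u + ((-(2*a*b*ρ*P/s)) * (u * gauss1 s u)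
          + (P * b^2 / s^2) * (u^2 * gauss1 s u)) := by
    funext u; field_simp; ring
  have hi2 : Integrable (fun u => (-(2*a*b*ρ*P/s)) * (u * gauss1 s u)
      + (P * b^2 / s^2) * (u^2 * gauss1 s u)) :=
    ((integrable_mul_gauss1 hs).const_mul _).add ((integrable_sq_mul_gauss1 hs).const_mul _)
  rw [hsplit, integral_add ((integrable_gauss1 hs).const_mul _) hi2,
    integral_add ((integrable_mul_gauss1 hs).const_mul _) ((integrable_sq_mul_gauss1 hs).const_mul _),
    integral_const_mul, integral_const_mul, integral_const_mul,
    integral_gauss1 hs, integral_mul_gauss1 hs, integral_sq_mul_gauss1 hs]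
  field_simp
  ring

lemma inner_integral (hs : 0 < s) (a b : ℝ) (y : ℝ) :
    (∫ x, p y * gauss1 s (x - y) * (a * score p y + b * (-((x - y)/s)))^2)
      = p y * (a^2 * (score p y)^2 + b^2 * (1/s)) := by
  have h1 : (∫ x, p y * gauss1 s (x - y) * (a * score p y + b * (-((x - y)/s)))^2)
      = ∫ x, (fun u => p y * gauss1 s u * (a * score p y + b * (-(u/s)))^2) (x - y) := rfl
  rw [h1, integral_sub_right_eq_self (fun u => p y * gauss1 s u * (a * score p y + b * (-(u/s)))^2) y]
  exact inner_integral_value hs _ _ a b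

lemma uncurry_integrable (hs : 0 < s) (hp0 : ∀ x, 0 ≤ p x) (hpm : Measurable p)
    (hIp : Integrable p) (hJfin : Integrable (fun x => p x * (score p x) ^ 2)) (a b : ℝ) :
    Integrable (Function.uncurry fun x y =>
      p y * gauss1 s (x - y) * (a * score p y + b * (-((x - y)/s)))^2)
      (MeasureTheory.volume.prod MeasureTheory.volume) := by
  have hFm : Measurable (Function.uncurry fun x y =>
      p y * gauss1 s (x - y) * (a * score p y + b * (-((x - y)/s)))^2) := by
    rw [Function.uncurry_def]
    exact ((hpm.comp measurable_snd).mul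
        (measurable_gauss1.comp (measurable_fst.sub measurable_snd))).mul
      (((((measurable_score hpm).comp measurable_snd).const_mul a).add
        ((((measurable_fst.sub measurable_snd)).div_const s).neg.const_mul b)).pow_const 2)
  rw [MeasureTheory.integrable_prod_iff' hFm.aestronglyMeasurable]
  constructor
  · filter_upwards with y
    simp only [Function.uncurry_apply_pair]
    have h1 : (fun x => p y * gauss1 s (x - y) * (a * score p y + b * (-((x - y)/s)))^2)
        = fun x => (fun u => p y * gauss1 s u * (a * score p y + b * (-(u/s)))^2) (x - y) := rfl
    rw [h1]
    exact (integrable_inner_shift hs _ _ a b).comp_sub_right y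
  · have hnorm : (fun y => ∫ x, ‖p y * gauss1 s (x - y) * (a * score p y + b * (-((x - y)/s)))^2‖)
        = fun y => p y * (a^2 * (score p y)^2 + b^2 * (1/s)) := by
      funext y
      rw [← inner_integral hs a b y]
      congr 1; funext x
      rw [Real.norm_eq_abs,
        abs_of_nonneg (mul_nonneg (mul_nonneg (hp0 y) (gauss1_pos hs _).le) (sq_nonneg _))]
    simp only [Function.uncurry_apply_pair]
    rw [hnorm]
    apply ((hJfin.const_mul (a^2)).add (hIp.const_mul (b^2 * (1/s)))).congr
    filter_upwards with y
    simp only [Pi.add_apply]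
    ring

lemma double_integral_value (hs : 0 < s) (hp0 : ∀ x, 0 ≤ p x) (hpm : Measurable p)
    (hIp : Integrable p) (hp1 : (∫ x, p x) = 1)
    (hJfin : Integrable (fun x => p x * (score p x) ^ 2)) (a b : ℝ) :
    (∫ x, ∫ y, p y * gauss1 s (x - y) * (a * score p y + b * (-((x - y)/s)))^2)
      = a^2 * fisherInfo p + b^2 * (1/s) := by
  rw [MeasureTheory.integral_integral_swap (uncurry_integrable hs hp0 hpm hIp hJfin a b)]
  have h1 : (∫ y, ∫ x, p y * gauss1 s (x - y) * (a * score p y + b * (-((x - y)/s)))^2)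
      = ∫ y, (a^2 * (p y * (score p y)^2) + (b^2 * (1/s)) * p y) := by
    congr 1; funext y
    rw [inner_integral hs a b y]; ring
  rw [h1, integral_add (hJfin.const_mul (a^2)) (hIp.const_mul (b^2 * (1/s))),
    integral_const_mul, integral_const_mul, hp1, mul_one, fisherInfo]

end Fub

/-- **Stam bound for Gaussian perturbations.**  For `X` with differentiable density and
finite positive Fisher information `J(X)`, and `X_s = X + N(0,s)` (independent noise,
`s > 0`), one has `J(X_s) ≤ 1/(1/J(X) + s)`. -/
theorem fisherInfo_gaussian_perturbation_le
    (p : ℝ → ℝ) (hp0 : ∀ x, 0 ≤ p x) (hpm : Measurable p) (hp1 : (∫ x, p x) = 1)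
    (hd : Differentiable ℝ p)
    (hJfin : Integrable (fun x => p x * (score p x) ^ 2))
    (hJpos : 0 < fisherInfo p)
    (s : ℝ) (hs : 0 < s) :
    fisherInfo (pertG p s) ≤ ((fisherInfo p)⁻¹ + s)⁻¹ := by
  have hIp : Integrable p := integrable_of_density hpm hp1
  have hIp' : Integrable (deriv p) := integrable_deriv_of_fisher hp0 hpm hp1 hd hJfin
  set J := fisherInfo p with hJdef
  set D := J⁻¹ + s with hDdef
  have hDpos : 0 < D := add_pos (inv_pos.2 hJpos) hs
  set a := J⁻¹ / D with hadef
  set b := s / D with hbdef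
  have hab : a + b = 1 := by rw [hadef, hbdef, ← add_div, hDdef, div_self hDpos.ne']
  have hUI := uncurry_integrable (p := p) hs hp0 hpm hIp hJfin a b
  have hPhi : Integrable (fun x => ∫ y,
      p y * gauss1 s (x - y) * (a * score p y + b * (-((x - y)/s)))^2) := by
    have := hUI.integral_prod_left
    simpa only [Function.uncurry_apply_pair] using this
  have hmono : fisherInfo (pertG p s) ≤ ∫ x, ∫ y,
      p y * gauss1 s (x - y) * (a * score p y + b * (-((x - y)/s)))^2 := by
    show (∫ x, pertG p s x * (score (pertG p s) x)^2) ≤ _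
    apply integral_mono_of_nonneg
    · filter_upwards with x
      exact mul_nonneg (pertG_pos hs hp0 hpm hp1 x).le (sq_nonneg _)
    · exact hPhi
    · filter_upwards with x
      exact pointwise_bound hs hp0 hpm hp1 hd hIp' hJfin a b hab x
  have hval := double_integral_value hs hp0 hpm hIp hp1 hJfin a b
  rw [hval] at hmono
  have halg : a^2 * fisherInfo p + b^2 * (1/s) = D⁻¹ := by
    rw [hadef, hbdef, hDdef, ← hJdef]
    have hD0 : J⁻¹ + s ≠ 0 := by rw [hDdef] at hDpos; exact hDpos.ne'
    field_simp
  rw [halg] at hmono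
  exact hmono
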